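/- Let k be an algebraically closed field of characteristic p > 0, let U ⊆ k be an additive subgroup of order p^n, and let 0 ≤ i < p^n. Then the k-subspace of homogeneous polynomials P ∈ k[x,y] of degree i satisfying P(x + λy, y) = P(x, y) for all λ ∈ U is one-dimensional, spanned by y^i. -/
import Mathlib


open MvPolynomial

/-- The `k`-algebra substitution `x ↦ x + λ·y, y ↦ y` on polynomials in two variables. -/
noncomputable def shearSubst (k : Type*) [CommRing k] (lam : k) :
    MvPolynomial (Fin 2) k →ₐ[k] MvPolynomial (Fin 2) k :=
  MvPolynomial.aeval ![X 0 + C lam * X 1, X 1]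

private lemma degree_fin2 (d : Fin 2 →₀ ℕ) : Finsupp.degree d = d 0 + d 1 := by
  rw [Finsupp.degree, ← Fin.sum_univ_two (fun j => d j)]
  exact Finset.sum_subset (Finset.subset_univ _)
    (fun x _ hx => Finsupp.notMem_support_iff.mp hx)

private lemma coeff_shear_key (k : Type*) [Field k] (i : ℕ) (P : MvPolynomial (Fin 2) k)
    (hdeg : ∀ d ∈ P.support, d 0 + d 1 = i) (lam : k) :
    Polynomial.coeff ((aeval ![0, Polynomial.X] : MvPolynomial (Fin 2) k →ₐ[k] Polynomial k)
        (shearSubst k lam P)) i = ∑ d ∈ P.support, P.coeff d * lam ^ (d 0) := by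
  classical
  have hφs : (aeval ![0, Polynomial.X] : MvPolynomial (Fin 2) k →ₐ[k] Polynomial k)
      (shearSubst k lam P)
      = aeval ![Polynomial.C lam * Polynomial.X, Polynomial.X] P := by
    rw [shearSubst, ← AlgHom.comp_apply]
    congr 1
    apply MvPolynomial.algHom_ext
    intro j
    fin_cases j <;> simp
  rw [hφs]
  conv_lhs => rw [P.as_sum]
  rw [map_sum, Polynomial.finset_sum_coeff]
  apply Finset.sum_congr rfl
  intro d hd
  rw [aeval_monomial, Finsupp.prod_fintype _ _ (fun j => pow_zero _), Fin.prod_univ_two]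
  simp only [Matrix.cons_val_zero, Matrix.cons_val_one, Matrix.head_cons]
  rw [mul_pow, ← Polynomial.C_pow, mul_assoc, ← pow_add, hdeg d hd]
  simp [Polynomial.coeff_C_mul, Polynomial.coeff_X_pow, mul_comm]
  left
  rw [← Polynomial.C_pow, Polynomial.coeff_mul_C, Polynomial.coeff_X_pow, if_pos rfl, one_mul]

/-- Let `k` be an algebraically closed field of characteristic `p > 0`,
let `U ⊆ k` be an additive subgroup of order `p ^ n`, and let `0 ≤ i < p ^ n`. Then the
`k`-subspace of homogeneous polynomials `P ∈ k[x,y]` of degree `i` satisfying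
`P(x + λy, y) = P(x, y)` for all `λ ∈ U` is one-dimensional, spanned by `y ^ i`. -/
theorem invariants_of_shear_eq_span_ypow
    (p : ℕ) (hp : p.Prime) (k : Type*) [Field k] [IsAlgClosed k] [CharP k p]
    (n : ℕ) (U : AddSubgroup k) (hU : Nat.card U = p ^ n)
    (i : ℕ) (hi : i < p ^ n) :
    {P : MvPolynomial (Fin 2) k |
        P.IsHomogeneous i ∧ ∀ lam ∈ U, shearSubst k lam P = P} =
      ↑(Submodule.span k {(X 1 : MvPolynomial (Fin 2) k) ^ i}) := by
  classical
  have hfinU : Finite U := Nat.finite_of_card_ne_zero (by rw [hU]; exact (pow_pos hp.pos n).ne')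
  have : Fintype U := Fintype.ofFinite U
  have hcardU : Fintype.card U = p ^ n := by rw [← Nat.card_eq_fintype_card, hU]
  ext P
  simp only [Set.mem_setOf_eq, SetLike.mem_coe, Submodule.mem_span_singleton]
  constructor
  · rintro ⟨hhom, hinv⟩
    have hdeg : ∀ d ∈ P.support, d 0 + d 1 = i := by
      intro d hd
      have h1 := hhom (mem_support_iff.mp hd)
      rw [← degree_fin2, Finsupp.degree_eq_weight_one]
      exact h1
    set e : Fin 2 →₀ ℕ := Finsupp.single 1 i with he
    set c : k := Polynomial.coeff
      ((aeval ![0, Polynomial.X] : MvPolynomial (Fin 2) k →ₐ[k] Polynomial k) P) i with hc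
    set Q : Polynomial k :=
      (∑ d ∈ P.support, Polynomial.C (P.coeff d) * Polynomial.X ^ (d 0)) - Polynomial.C c
      with hQ
    have hQeval : ∀ lam ∈ U, Q.eval lam = 0 := by
      intro lam hlam
      have h2 := coeff_shear_key k i P hdeg lam
      rw [hinv lam hlam, ← hc] at h2
      rw [hQ]
      simp only [Polynomial.eval_sub, Polynomial.eval_finset_sum, Polynomial.eval_mul,
        Polynomial.eval_C, Polynomial.eval_pow, Polynomial.eval_X]
      rw [← h2]
      ring
    have hQdeg : Q.natDegree < p ^ n := by
      have h3 : Q.natDegree ≤ i := by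
        apply le_trans (Polynomial.natDegree_sub_le _ _)
        rw [max_le_iff]
        constructor
        · apply Polynomial.natDegree_sum_le_of_forall_le
          intro d hd
          apply le_trans (Polynomial.natDegree_C_mul_le _ _)
          rw [Polynomial.natDegree_X_pow]
          have := hdeg d hd
          omega
        · simp [Polynomial.natDegree_C]
      exact lt_of_le_of_lt h3 hi
    have hQ0 : Q = 0 := by
      apply Polynomial.eq_zero_of_natDegree_lt_card_of_eval_eq_zero Q
        (Subtype.val_injective (p := fun x => x ∈ U))
      · exact fun u => hQeval u u.2
      · rw [hcardU]; exact hQdeg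
    -- injectivity of d ↦ d 0 on support
    have hinj : ∀ d ∈ P.support, ∀ d' ∈ P.support, d 0 = d' 0 → d = d' := by
      intro d hd d' hd' h0
      have h1 := hdeg d hd
      have h2 := hdeg d' hd'
      have h1' : d 1 = d' 1 := by omega
      ext j
      fin_cases j
      · exact h0
      · exact h1'
    -- every d in support has d 0 = 0
    have hsupp : ∀ d ∈ P.support, d 0 = 0 := by
      intro d hd
      by_contra hd0
      have hcoeff : Q.coeff (d 0) = P.coeff d := by
        rw [hQ, Polynomial.coeff_sub, Polynomial.coeff_C, if_neg hd0,
          Polynomial.finset_sum_coeff, sub_zero]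
        rw [Finset.sum_eq_single d]
        · rw [Polynomial.coeff_C_mul, Polynomial.coeff_X_pow, if_pos rfl, mul_one]
        · intro d' hd' hne
          rw [Polynomial.coeff_C_mul, Polynomial.coeff_X_pow, if_neg, mul_zero]
          exact fun h => hne (hinj d' hd' d hd h.symm)
        · intro h; exact absurd hd h
      rw [hQ0, Polynomial.coeff_zero] at hcoeff
      exact mem_support_iff.mp hd hcoeff.symm
    -- hence support ⊆ {e} and P = coeff e P • X1^i
    refine ⟨P.coeff e, ?_⟩
    have hXpow : (X 1 : MvPolynomial (Fin 2) k) ^ i = monomial e 1 := by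
      rw [he, X_pow_eq_monomial]
    rw [hXpow]
    apply MvPolynomial.ext
    intro d
    rw [smul_eq_C_mul, coeff_C_mul, coeff_monomial]
    by_cases hde : e = d
    · rw [if_pos hde, mul_one, hde]
    · rw [if_neg hde, mul_zero]
      by_contra hne
      have hd : d ∈ P.support := mem_support_iff.mpr (fun h => hne h.symm)
      have h0 := hsupp d hd
      have h1 := hdeg d hd
      apply hde
      have he0 : e 0 = d 0 := by simp [he, h0, Finsupp.single_apply]
      have he1 : e 1 = d 1 := by
        simp only [he, Finsupp.single_apply, if_pos rfl, if_true]
        omega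
      ext j
      fin_cases j
      · exact he0
      · exact he1
  · rintro ⟨a, rfl⟩
    constructor
    · have h1 : ((X 1 : MvPolynomial (Fin 2) k) ^ i).IsHomogeneous i := by
        have := (isHomogeneous_X k (1 : Fin 2)).pow i
        simpa using this
      exact (mem_homogeneousSubmodule _ _).mp
        ((homogeneousSubmodule (Fin 2) k i).smul_mem a
          ((mem_homogeneousSubmodule _ _).mpr h1))
    · intro lam _
      rw [map_smul, map_pow, shearSubst, aeval_X]
      simp
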